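/- Let k ≥ 2 and let v ∈ ℤ^{2k} be the vector (x,…,x, x+λd, x+d,…,x+d) consisting of p copies of x, then one entry x+λd, then 2k−p−1 copies of x+d, for some integers x, λ, d, p with d > 0 and 1 ≤ p ≤ 2k−2. Then for every integer n, v is Hurwitz equivalent to v + 2nd·𝟏, where 𝟏 = (1,…,1) ∈ ℤ^{2k}. -/

import Mathlib

/-- Alternating sum `Δ(v) = Σ (-1)^i * v i` (0-indexed; `(-1)^(i-1) a_i` in 1-indexed terms). -/
def Delta {m : ℕ} (v : Fin m → ℤ) : ℤ :=
  ∑ i : Fin m, (-1 : ℤ) ^ (i : ℕ) * v i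

/-- `d(v)`: the (nonnegative) gcd of all pairwise differences of the entries of `v`;
for nonempty `v` this equals `gcd {v i - v 0 : i}`. -/
def dgcd {m : ℕ} (v : Fin m → ℤ) : ℤ :=
  Finset.univ.gcd (fun p : Fin m × Fin m => v p.1 - v p.2)

/-- `M(v)_N`: the multiset of residues of the entries of `v` modulo `N`
(for `N = 0` this is the multiset of the entries themselves). -/
def resM {m : ℕ} (v : Fin m → ℤ) (N : ℤ) : Multiset ℤ :=
  (Finset.univ.val : Multiset (Fin m)).map (fun i => v i % N)

/-- The Hurwitz move `v·σ_i` (0-indexed `i`). -/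
def sigmaAct {m : ℕ} (i : Fin (m - 1)) (v : Fin m → ℤ) : Fin m → ℤ :=
  have h : (i : ℕ) < m - 1 := i.isLt
  fun j =>
    if (j : ℕ) = (i : ℕ) then v ⟨(i : ℕ) + 1, by omega⟩
    else if (j : ℕ) = (i : ℕ) + 1 then
      2 * v ⟨(i : ℕ) + 1, by omega⟩ - v ⟨(i : ℕ), by omega⟩
    else v j

/-- The inverse Hurwitz move `v·σ_i⁻¹` (0-indexed `i`). -/
def sigmaInvAct {m : ℕ} (i : Fin (m - 1)) (v : Fin m → ℤ) : Fin m → ℤ :=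
  have h : (i : ℕ) < m - 1 := i.isLt
  fun j =>
    if (j : ℕ) = (i : ℕ) then 2 * v ⟨(i : ℕ), by omega⟩ - v ⟨(i : ℕ) + 1, by omega⟩
    else if (j : ℕ) = (i : ℕ) + 1 then v ⟨(i : ℕ), by omega⟩
    else v j

/-- The virtual move `v·τ_i`: swap the `i`-th and `(i+1)`-st entries (0-indexed `i`). -/
def tauAct {m : ℕ} (i : Fin (m - 1)) (v : Fin m → ℤ) : Fin m → ℤ :=
  have h : (i : ℕ) < m - 1 := i.isLt
  fun j =>
    if (j : ℕ) = (i : ℕ) then v ⟨(i : ℕ) + 1, by omega⟩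
    else if (j : ℕ) = (i : ℕ) + 1 then v ⟨(i : ℕ), by omega⟩
    else v j

/-- Hurwitz equivalence: the equivalence relation on `ℤ^m` generated by `v ∼ v·σ_i`. -/
def HurwitzEquiv {m : ℕ} : (Fin m → ℤ) → (Fin m → ℤ) → Prop :=
  Relation.EqvGen (fun v w => ∃ i : Fin (m - 1), w = sigmaAct i v)

/-- A letter of a braid word: an index `i` and a sign (`true` = `σ_i`, `false` = `σ_i⁻¹`). -/
abbrev BraidLetter (m : ℕ) := Fin (m - 1) × Bool

/-- Action of a single braid letter. -/
def braidLetterAct {m : ℕ} (l : BraidLetter m) (v : Fin m → ℤ) : Fin m → ℤ :=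
  if l.2 then sigmaAct l.1 v else sigmaInvAct l.1 v

/-- Action `v·β` of a braid word (letters applied in order). -/
def braidWordAct {m : ℕ} (β : List (BraidLetter m)) (v : Fin m → ℤ) : Fin m → ℤ :=
  β.foldl (fun w l => braidLetterAct l w) v

/-- The transposition `(i, i+1)` of `Fin m` associated to the index `i`. -/
def letterPerm {m : ℕ} (i : Fin (m - 1)) : Equiv.Perm (Fin m) :=
  have h : (i : ℕ) < m - 1 := i.isLt
  Equiv.swap ⟨(i : ℕ), by omega⟩ ⟨(i : ℕ) + 1, by omega⟩

/-- The underlying permutation `π_β` of a braid word: the product, composed in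
the same order as the letters are applied, of the transpositions `(i, i+1)`. -/
def braidWordPerm {m : ℕ} (β : List (BraidLetter m)) : Equiv.Perm (Fin m) :=
  β.foldl (fun p l => letterPerm l.1 * p) 1

/-- Pure-braid Hurwitz equivalence: related by a braid word with trivial
underlying permutation. -/
def PureEquiv {m : ℕ} (v w : Fin m → ℤ) : Prop :=
  ∃ β : List (BraidLetter m), braidWordAct β v = w ∧ braidWordPerm β = 1

/-- A letter of a virtual braid word: `(i, none)` = `τ_i`, `(i, some true)` = `σ_i`,
`(i, some false)` = `σ_i⁻¹`. -/
abbrev VBraidLetter (m : ℕ) := Fin (m - 1) × Option Bool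

/-- Action of a single virtual braid letter. -/
def vletterAct {m : ℕ} (l : VBraidLetter m) (v : Fin m → ℤ) : Fin m → ℤ :=
  match l.2 with
  | none => tauAct l.1 v
  | some true => sigmaAct l.1 v
  | some false => sigmaInvAct l.1 v

/-- Action `v·β` of a virtual braid word (letters applied in order). -/
def vwordAct {m : ℕ} (β : List (VBraidLetter m)) (v : Fin m → ℤ) : Fin m → ℤ :=
  β.foldl (fun w l => vletterAct l w) v

/-- The underlying permutation `π_β` of a virtual braid word. -/
def vwordPerm {m : ℕ} (β : List (VBraidLetter m)) : Equiv.Perm (Fin m) :=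
  β.foldl (fun p l => letterPerm l.1 * p) 1

/-- Virtual braid equivalence: `w = v·β` for some virtual braid word `β`. -/
def VirtualEquiv {m : ℕ} (v w : Fin m → ℤ) : Prop :=
  ∃ β : List (VBraidLetter m), vwordAct β v = w

/-- Virtual-pure-braid equivalence: related by a virtual braid word with trivial
underlying permutation. -/
def VPureEquiv {m : ℕ} (v w : Fin m → ℤ) : Prop :=
  ∃ β : List (VBraidLetter m), vwordAct β v = w ∧ vwordPerm β = 1

/-- Hurwitz move relation on lists. -/
def HLrel (l l' : List ℤ) : Prop :=
  ∃ (t : List ℤ) (a b : ℤ) (r : List ℤ),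
    l = t ++ a :: b :: r ∧ l' = t ++ b :: (2*b - a) :: r

def HL : List ℤ → List ℤ → Prop := Relation.EqvGen HLrel

lemma HL.refl (l : List ℤ) : HL l l := Relation.EqvGen.refl l
lemma HL.symm {l l' : List ℤ} (h : HL l l') : HL l' l := Relation.EqvGen.symm _ _ h
lemma HL.trans {l₁ l₂ l₃ : List ℤ} (h : HL l₁ l₂) (h' : HL l₂ l₃) : HL l₁ l₃ :=
  Relation.EqvGen.trans _ _ _ h h'

lemma HLstep (t : List ℤ) (a b : ℤ) (r : List ℤ) :
    HL (t ++ a :: b :: r) (t ++ b :: (2*b - a) :: r) :=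
  Relation.EqvGen.rel _ _ ⟨t, a, b, r, rfl, rfl⟩

lemma HLrel.length {l l' : List ℤ} (h : HLrel l l') : l.length = l'.length := by
  obtain ⟨t, a, b, r, rfl, rfl⟩ := h; simp

lemma HL.length {l l' : List ℤ} (h : HL l l') : l.length = l'.length := by
  induction h with
  | rel _ _ h => exact h.length
  | refl => rfl
  | symm _ _ _ ih => exact ih.symm
  | trans _ _ _ _ _ ih1 ih2 => exact ih1.trans ih2

lemma HL.cons {l l' : List ℤ} (x : ℤ) (h : HL l l') : HL (x :: l) (x :: l') := by
  induction h with
  | rel a b hab =>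
    obtain ⟨t, p, q, r, rfl, rfl⟩ := hab
    exact Relation.EqvGen.rel _ _ ⟨x :: t, p, q, r, rfl, rfl⟩
  | refl => exact HL.refl _
  | symm _ _ _ ih => exact ih.symm
  | trans _ _ _ _ _ ih1 ih2 => exact ih1.trans ih2

lemma HL.prefix {l l' : List ℤ} (s : List ℤ) (h : HL l l') : HL (s ++ l) (s ++ l') := by
  induction s with
  | nil => simpa using h
  | cons x s ih => exact ih.cons x

lemma HL.map {l l' : List ℤ} (c : ℤ) (h : HL l l') :
    HL (l.map (· + c)) (l'.map (· + c)) := by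
  induction h with
  | rel a b hab =>
    obtain ⟨t, p, q, r, rfl, rfl⟩ := hab
    refine Relation.EqvGen.rel _ _ ⟨t.map (· + c), p + c, q + c, r.map (· + c), by simp, ?_⟩
    simp only [List.map_append, List.map_cons]
    congr 2
    ring
  | refl => exact HL.refl _
  | symm _ _ _ ih => exact ih.symm
  | trans _ _ _ _ _ ih1 ih2 => exact ih1.trans ih2

/-- pass the left neighbor: `(u, a, a+e, …) ~ (a, a+e, u+2e, …)`. -/
lemma Mleft (u a e : ℤ) (r : List ℤ) :
    HL (u :: a :: (a+e) :: r) (a :: (a+e) :: (u + 2*e) :: r) := by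
  have s1 := HLstep [] u a ((a+e) :: r)
  have s2 := HLstep [a] (2*a - u) (a+e) r
  simp only [List.nil_append, List.cons_append, List.singleton_append] at s1 s2
  have e1 : 2*(a+e) - (2*a - u) = u + 2*e := by ring
  rw [e1] at s2
  exact s1.trans s2

/-- pass right: `(a, a+e, s, …) ~ (s−2e, a, a+e, …)`. -/
lemma Mright (s a e : ℤ) (r : List ℤ) :
    HL (a :: (a+e) :: s :: r) ((s - 2*e) :: a :: (a+e) :: r) := by
  have h := Mleft (s - 2*e) a e r
  have e1 : s - 2*e + 2*e = s := by ring
  rw [e1] at h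
  exact h.symm

/-- flip-pass: `(p, q, u, …) ~ (u, 2u−p, 2u−q, …)`. -/
lemma Mflip (p q u : ℤ) (r : List ℤ) :
    HL (p :: q :: u :: r) (u :: (2*u - p) :: (2*u - q) :: r) := by
  have s1 := HLstep [p] q u r
  have s2 := HLstep [] p u ((2*u - q) :: r)
  simp only [List.nil_append, List.cons_append, List.singleton_append] at s1 s2
  exact s1.trans s2

lemma HL.congr {l m l' m' : List ℤ} (h : HL l m) (h1 : l = l') (h2 : m = m') :
    HL l' m' := h1 ▸ h2 ▸ h

lemma cons2_eq {a b a' b' : ℤ} (r : List ℤ) (h1 : a = a') (h2 : b = b') :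
    a :: b :: r = a' :: b' :: r := by rw [h1, h2]

lemma HLstep0 (a b : ℤ) (r : List ℤ) : HL (a :: b :: r) (b :: (2*b - a) :: r) :=
  HLstep [] a b r

/-- full twist on a pair: shifts both by `2e`. -/
lemma twist (a e : ℤ) (r : List ℤ) :
    HL (a :: (a+e) :: r) ((a + 2*e) :: (a + 3*e) :: r) := by
  refine ((HLstep0 a (a+e) r).trans ((HLstep0 (a+e) (2*(a+e)-a) r).congr rfl ?_)).congr rfl rfl
  exact cons2_eq r (by ring) (by ring)

/-- iterated twist: shift a difference-`e` pair by any multiple `t*e`. -/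
lemma pairShift (t : ℤ) (a e : ℤ) (r : List ℤ) :
    HL (a :: (a+e) :: r) ((a + t*e) :: (a + t*e + e) :: r) := by
  induction t using Int.induction_on with
  | zero => exact (HL.refl _).congr rfl (cons2_eq r (by ring) (by ring))
  | succ i ih =>
    have s := (HLstep0 (a + i*e) (a + i*e + e) r).congr rfl
      (cons2_eq r (by push_cast; ring) (by push_cast; ring)
        : _ = (a + (i+1:ℤ)*e) :: (a + (i+1:ℤ)*e + e) :: r)
    exact ih.trans s
  | pred i ih =>
    have s := (HLstep0 (a + (-i-1)*e) (a + (-i-1)*e + e) r).congr rfl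
      (cons2_eq r (by push_cast; ring) (by push_cast; ring)
        : _ = (a + (-i:ℤ)*e) :: (a + (-i:ℤ)*e + e) :: r)
    exact ih.trans s.symm

/-- Sweep a difference-`e` pair to the left over `L`, shifting `L` by `2e`. -/
lemma sweepLeft (L : List ℤ) (a e : ℤ) (r : List ℤ) :
    HL (L ++ a :: (a+e) :: r) (a :: (a+e) :: (L.map (· + 2*e) ++ r)) := by
  induction L generalizing r with
  | nil => exact HL.refl _
  | cons u L ih =>
    have h1 : HL (u :: (L ++ a :: (a+e) :: r)) (u :: a :: (a+e) :: (L.map (· + 2*e) ++ r)) :=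
      (ih r).cons u
    exact h1.trans (Mleft u a e _)

/-- drift function of the flip-transport. -/
def gp : List ℤ → ℤ → ℤ
  | [], p => p
  | u :: U, p => gp U (2*u - p)

lemma transR (U : List ℤ) (p q : ℤ) (r : List ℤ) :
    HL (p :: q :: (U ++ r)) (U ++ gp U p :: gp U q :: r) := by
  induction U generalizing p q with
  | nil => exact HL.refl _
  | cons u U ih =>
    have h1 : HL (p :: q :: (u :: (U ++ r))) (u :: (2*u - p) :: (2*u - q) :: (U ++ r)) :=
      Mflip p q u (U ++ r)
    exact h1.trans ((ih (2*u - p) (2*u - q)).cons u)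

lemma gp_sub (U : List ℤ) (p q : ℤ) : gp U q - gp U p = (-1)^U.length * (q - p) := by
  induction U generalizing p q with
  | nil => simp [gp]
  | cons u U ih =>
    rw [gp, gp, ih]
    simp [pow_succ]
    ring

lemma gp_dvd (U : List ℤ) (d a : ℤ) (hU : ∀ u ∈ U, d ∣ (u - a)) (p : ℤ) (hp : d ∣ (p - a)) :
    d ∣ (gp U p - a) := by
  induction U generalizing p with
  | nil => exact hp
  | cons u U ih =>
    rw [gp]
    refine ih (fun u hu => hU u (by simp [hu])) _ ?_
    have h1 := hU u (by simp)
    have : 2*u - p - a = 2*(u - a) - (p - a) := by ring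
    rw [this]
    exact dvd_sub (Dvd.dvd.mul_left h1 2) hp

/-- KEY: a vector ending in a difference-`d` pair, all entries congruent mod `d`,
is equivalent to its shift by `2d`. -/
lemma key (d : ℤ) (hd : d ≠ 0) (L : List ℤ) (hL : Even L.length) (a : ℤ)
    (hcos : ∀ l ∈ L, d ∣ (l - a)) :
    HL (L ++ [a, a + d]) ((L ++ [a, a + d]).map (· + 2*d)) := by
  set U := L.map (· + 2*d) with hU
  -- step 1: sweep left
  have h1 : HL (L ++ [a, a + d]) (a :: (a+d) :: U) := by
    have := sweepLeft L a d []
    simpa using this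
  -- step 2: twist
  have h2 : HL (a :: (a+d) :: U) ((a + 2*d) :: (a + 3*d) :: U) := twist a d U
  -- step 3: transport right
  have h3 : HL ((a + 2*d) :: (a + 3*d) :: U) (U ++ gp U (a + 2*d) :: gp U (a + 3*d) :: []) := by
    have := transR U (a + 2*d) (a + 3*d) []
    simpa using this
  -- facts about the transported pair
  have hUlen : U.length = L.length := by simp [hU]
  have hdiff : gp U (a + 3*d) - gp U (a + 2*d) = d := by
    rw [gp_sub, hUlen, hL.neg_one_pow]
    ring
  have hUcos : ∀ u ∈ U, d ∣ (u - a) := by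
    intro u hu
    rw [hU] at hu
    obtain ⟨l, hl, rfl⟩ := List.mem_map.mp hu
    have : l + 2*d - a = (l - a) + 2*d := by ring
    rw [this]
    exact dvd_add (hcos l hl) ⟨2, by ring⟩
  have hP : d ∣ (gp U (a + 2*d) - a) := gp_dvd U d a hUcos _ ⟨2, by ring⟩
  obtain ⟨s, hs⟩ := hP
  -- step 4: correct the pair by twisting
  have h4 : HL (U ++ gp U (a + 2*d) :: gp U (a + 3*d) :: [])
      (U ++ (a + 2*d) :: (a + 3*d) :: []) := by
    refine HL.prefix U ?_
    have hpair : gp U (a + 3*d) = gp U (a + 2*d) + d := by omega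
    have := pairShift (2 - s) (gp U (a + 2*d)) d []
    rw [hpair]
    refine this.congr rfl (cons2_eq [] ?_ ?_) <;> linear_combination hs
  have hfin : (L ++ [a, a + d]).map (· + 2*d) = U ++ (a + 2*d) :: (a + 3*d) :: [] := by
    simp [hU]
    ring
  rw [hfin]
  exact ((h1.trans h2).trans h3).trans h4

lemma shift_step (d : ℤ) (hd : d ≠ 0) (L : List ℤ) (hL : Even L.length) (a : ℤ)
    (hcos : ∀ l ∈ L, d ∣ (l - a)) (c : ℤ) :
    HL ((L ++ [a, a + d]).map (· + c)) ((L ++ [a, a + d]).map (· + (c + 2*d))) := by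
  have hform : (L ++ [a, a + d]).map (· + c) = (L.map (· + c)) ++ [a + c, (a + c) + d] := by
    simp
    ring
  have hk := key d hd (L.map (· + c)) (by simpa using hL) (a + c) (by
    intro l hl
    obtain ⟨u, hu, rfl⟩ := List.mem_map.mp hl
    have : u + c - (a + c) = u - a := by ring
    rw [this]
    exact hcos u hu)
  rw [hform]
  refine hk.congr rfl ?_
  rw [← hform]
  simp only [List.map_map]
  refine List.map_congr_left ?_
  intro u _
  simp [Function.comp]
  ring

lemma nshift (d : ℤ) (hd : d ≠ 0) (L : List ℤ) (hL : Even L.length) (a : ℤ)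
    (hcos : ∀ l ∈ L, d ∣ (l - a)) (n : ℤ) :
    HL (L ++ [a, a + d]) ((L ++ [a, a + d]).map (· + 2*n*d)) := by
  induction n using Int.induction_on with
  | zero =>
    refine (HL.refl _).congr rfl ?_
    simp
  | succ i ih =>
    have hs := shift_step d hd L hL a hcos (2*i*d)
    refine (ih.trans hs).congr rfl ?_
    refine List.map_congr_left ?_
    intro u _
    push_cast
    ring
  | pred i ih =>
    have hs := shift_step d hd L hL a hcos (2*(-i-1)*d)
    have hs' : HL ((L ++ [a, a + d]).map (· + 2*(-i-1)*d)) ((L ++ [a, a + d]).map (· + 2*(-(i:ℤ))*d)) := by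
      refine hs.congr rfl ?_
      refine List.map_congr_left ?_
      intro u _
      ring
    have := ih.trans hs'.symm
    refine this.congr rfl ?_
    refine List.map_congr_left ?_
    intro u _
    push_cast
    ring

/-- move a difference-`e` pair right through `j` copies of `a+e`. -/
lemma rbsweep (j : ℕ) (a e : ℤ) (r : List ℤ) :
    HL (a :: (a+e) :: (List.replicate j (a+e) ++ r))
       (List.replicate j (a-e) ++ a :: (a+e) :: r) := by
  induction j generalizing r with
  | zero => exact HL.refl _
  | succ j ih =>
    have h1 : HL (a :: (a+e) :: ((a+e) :: (List.replicate j (a+e) ++ r)))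
        ((a-e) :: a :: (a+e) :: (List.replicate j (a+e) ++ r)) :=
      (Mright (a+e) a e _).congr rfl (by rw [show a + e - 2*e = a - e by ring])
    have h2 := (ih r).cons (a-e)
    refine (h1.trans h2).congr ?_ ?_
    · simp [List.replicate_succ]
    · simp [List.replicate_succ]

lemma main_list (d : ℤ) (hd : d ≠ 0) (x lam : ℤ) (p' q' : ℕ) (hE : Even (p' + q' + 1)) (n : ℤ) :
    HL (List.replicate (p'+1) x ++ (x + lam*d) :: List.replicate (q'+1) (x+d))
       ((List.replicate (p'+1) x ++ (x + lam*d) :: List.replicate (q'+1) (x+d)).map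
         (· + 2*n*d)) := by
  set vlist := List.replicate (p'+1) x ++ (x + lam*d) :: List.replicate (q'+1) (x+d) with hv
  set L := List.replicate p' x ++ (x - lam*d) :: List.replicate q' (x - d) with hLdef
  -- Step A
  have hA : HL (List.replicate p' x ++ (x - lam*d) :: x :: List.replicate (q'+1) (x+d))
      vlist := by
    have := HLstep (List.replicate p' x) (x - lam*d) x (List.replicate (q'+1) (x+d))
    refine this.congr rfl ?_
    rw [hv, show p'+1 = p'+1 from rfl, List.replicate_succ' (n := p') (a := x),
      show 2*x - (x - lam*d) = x + lam*d by ring]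
    simp
  -- Step B
  have hB : HL (List.replicate p' x ++ (x - lam*d) :: x :: List.replicate (q'+1) (x+d))
      (L ++ [x, x + d]) := by
    have hsw := rbsweep q' x d []
    have h1 : HL (x :: (x+d) :: List.replicate q' (x+d))
        (List.replicate q' (x-d) ++ [x, x+d]) := by
      refine hsw.congr ?_ rfl
      simp
    have h2 := (h1.cons (x - lam*d)).prefix (List.replicate p' x)
    refine h2.congr ?_ ?_
    · rw [List.replicate_succ]
    · rw [hLdef]
      simp
  have hvw : HL vlist (L ++ [x, x + d]) := hA.symm.trans hB
  have hLlen : Even (L ++ [x, x + d] : List ℤ).length ∨ True := Or.inr trivial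
  have hEvenL : Even L.length := by
    rw [hLdef]
    simpa [Nat.add_assoc] using hE
  have hcos : ∀ l ∈ L, d ∣ (l - x) := by
    intro l hl
    rw [hLdef] at hl
    simp only [List.mem_append, List.mem_replicate, List.mem_cons] at hl
    rcases hl with ⟨_, rfl⟩ | rfl | ⟨_, rfl⟩
    · simp
    · exact ⟨-lam, by ring⟩
    · exact ⟨-1, by ring⟩
  have hn := nshift d hd L hEvenL x hcos n
  exact (hvw.trans hn).trans ((hvw.map (2*n*d)).symm)

lemma list_length_mid (t : List ℤ) (a b : ℤ) (r : List ℤ) :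
    (t ++ a :: b :: r).length = t.length + r.length + 2 := by simp; omega

lemma cons2_getElem (a b : ℤ) (r : List ℤ) (j : ℕ) (hj : j < (a :: b :: r).length) :
    (a :: b :: r)[j] = if h0 : j = 0 then a else if h1 : j = 1 then b
      else r[j-2]'(by simp at hj; omega) := by
  match j with
  | 0 => simp
  | 1 => simp
  | (n+2) => simp

lemma getElem_mid (t : List ℤ) (a b : ℤ) (r : List ℤ) (j : ℕ)
    (hj : j < (t ++ a :: b :: r).length) :
    (t ++ a :: b :: r)[j] =
      if h : j < t.length then t[j]
      else if h2 : j = t.length then a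
      else if h3 : j = t.length + 1 then b
      else r[j - t.length - 2]'(by rw [list_length_mid] at hj; omega) := by
  rw [List.getElem_append]
  by_cases h : j < t.length
  · simp [h]
  · rw [dif_neg h, dif_neg h, cons2_getElem]
    by_cases h2 : j = t.length
    · rw [dif_pos (by omega : j - t.length = 0), dif_pos h2]
    · rw [dif_neg (by omega : ¬ j - t.length = 0), dif_neg h2]
      by_cases h3 : j = t.length + 1
      · rw [dif_pos (by omega : j - t.length = 1), dif_pos h3]
      · rw [dif_neg (by omega : ¬ j - t.length = 1), dif_neg h3]

lemma transfer_aux {m : ℕ} {l l' : List ℤ} (h : HL l l') :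
    ∀ (v w : Fin m → ℤ), List.ofFn v = l → List.ofFn w = l' → HurwitzEquiv v w := by
  induction h with
  | rel l1 l2 hr =>
    obtain ⟨t, a, b, r, rfl, rfl⟩ := hr
    intro v w hv hw
    have hm : m = t.length + r.length + 2 := by
      rw [← list_length_mid t a b r, ← hv, List.length_ofFn]
    have hvj : ∀ (j : ℕ) (hj : j < m), v ⟨j, hj⟩ = (t ++ a :: b :: r)[j]'(by
        rw [list_length_mid]; omega) := by
      intro j hj
      exact (List.getElem_ofFn (f := v) (i := j) (by simpa using hj)).symm.trans (List.getElem_of_eq hv (by simp; omega))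
    have hwj : ∀ (j : ℕ) (hj : j < m), w ⟨j, hj⟩ = (t ++ b :: (2*b - a) :: r)[j]'(by
        rw [list_length_mid]; omega) := by
      intro j hj
      exact (List.getElem_ofFn (f := w) (i := j) (by simpa using hj)).symm.trans (List.getElem_of_eq hw (by simp; omega))
    refine Relation.EqvGen.rel _ _ ⟨⟨t.length, by omega⟩, ?_⟩
    funext j
    have hj := j.isLt
    have hvT : v ⟨t.length, by omega⟩ = a := by
      rw [hvj, getElem_mid]
      simp
    have hvT1 : v ⟨t.length + 1, by omega⟩ = b := by
      rw [hvj, getElem_mid]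
      simp
    simp only [sigmaAct, Fin.val_mk]
    by_cases h1 : (j : ℕ) = t.length
    · rw [if_pos h1]
      have hje : j = (⟨t.length, by omega⟩ : Fin m) := Fin.ext h1
      rw [hje, hwj, getElem_mid, hvT1]
      simp
    · rw [if_neg h1]
      by_cases h2 : (j : ℕ) = t.length + 1
      · rw [if_pos h2]
        have hje : j = (⟨t.length + 1, by omega⟩ : Fin m) := Fin.ext h2
        rw [hje, hwj, getElem_mid, hvT1, hvT]
        simp
      · rw [if_neg h2]
        have hj' : (j : ℕ) < m := j.isLt
        have hje : j = (⟨(j : ℕ), hj'⟩ : Fin m) := Fin.ext rfl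
        rw [hje, hwj, hvj, getElem_mid, getElem_mid]
        by_cases h0 : (j : ℕ) < t.length
        · simp [h0]
        · simp [h0, h1, h2]
  | refl l1 =>
    intro v w hv hw
    have : v = w := by
      apply List.ofFn_injective
      rw [hv, hw]
    rw [this]
    exact Relation.EqvGen.refl _
  | symm l1 l2 _ ih =>
    intro v w hv hw
    exact Relation.EqvGen.symm _ _ (ih w v hw hv)
  | trans l1 l2 l3 h12 h23 ih1 ih2 =>
    intro v w hv hw
    have hlen : l2.length = m := by
      rw [← HL.length h12, ← hv, List.length_ofFn]
    set u : Fin m → ℤ := fun i => l2[(i : ℕ)]'(by rw [hlen]; exact i.isLt) with hu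
    have h2 : List.ofFn u = l2 := by
      apply List.ext_getElem
      · simp [hlen]
      · intro i h1' h2'
        simp [hu]
    exact Relation.EqvGen.trans _ _ _ (ih1 v u hv h2) (ih2 u w h2 hw)

/-- for `v = (x,…,x, x+λd, x+d,…,x+d) ∈ ℤ^{2k}` (`p` copies of `x`,
one `x+λd`, `2k−p−1` copies of `x+d`, `d > 0`, `1 ≤ p ≤ 2k−2`), `v` is Hurwitz
equivalent to `v + 2nd·𝟏` for every integer `n`. -/

theorem stmt_9 (k : ℕ) (hk : 2 ≤ k) (x lam d : ℤ) (p : ℕ) (hd : 0 < d)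
    (hp1 : 1 ≤ p) (hp2 : p ≤ 2 * k - 2) (n : ℤ) :
    HurwitzEquiv
      (fun j : Fin (2 * k) =>
        if (j : ℕ) < p then x else if (j : ℕ) = p then x + lam * d else x + d)
      (fun j : Fin (2 * k) =>
        (if (j : ℕ) < p then x else if (j : ℕ) = p then x + lam * d else x + d)
          + 2 * n * d) := by
  have hlist := main_list d (by omega) x lam (p - 1) (2*k - 2 - p)
    (⟨k - 1, by omega⟩ : Even ((p - 1) + (2*k - 2 - p) + 1)) n
  have hofv : List.ofFn (fun j : Fin (2 * k) =>
      if (j : ℕ) < p then x else if (j : ℕ) = p then x + lam * d else x + d)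
      = List.replicate (p - 1 + 1) x ++ (x + lam * d) ::
        List.replicate (2*k - 2 - p + 1) (x + d) := by
    apply List.ext_getElem
    · simp
      omega
    · intro i hi1 hi2
      rw [List.getElem_ofFn]
      have hrep : List.replicate (p - 1 + 1) x ++ (x + lam * d) ::
            List.replicate (2*k - 2 - p + 1) (x + d)
          = List.replicate (p - 1 + 1) x ++ (x + lam * d) :: (x + d) ::
            List.replicate (2*k - 2 - p) (x + d) := by
        simp [List.replicate_succ]
      rw [List.getElem_of_eq hrep hi2, getElem_mid]
      simp only [List.length_replicate]
      by_cases c1 : i < p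
      · rw [if_pos (by simpa using c1), dif_pos (by omega)]
        exact (List.getElem_replicate _).symm
      · rw [if_neg (by simpa using c1), dif_neg (by omega)]
        by_cases c2 : i = p
        · rw [if_pos (by simpa using c2), dif_pos (by omega)]
        · rw [if_neg (by simpa using c2), dif_neg (by omega)]
          have hi1' : i < 2 * k := by simpa using hi1
          by_cases c3 : i = p - 1 + 1 + 1
          · rw [dif_pos c3]
          · rw [dif_neg c3]
            exact (List.getElem_replicate _).symm
  have hofw : List.ofFn (fun j : Fin (2 * k) =>
      (if (j : ℕ) < p then x else if (j : ℕ) = p then x + lam * d else x + d) + 2 * n * d)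
      = (List.replicate (p - 1 + 1) x ++ (x + lam * d) ::
        List.replicate (2*k - 2 - p + 1) (x + d)).map (· + 2*n*d) := by
    rw [← hofv, List.map_ofFn]
    rfl
  exact transfer_aux hlist _ _ hofv hofw
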